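/- For every constant κ ∈ (0, 1/2) there exist c > 0 and n₀ such that the following holds for every multiple of 4, n ≥ n₀, every M ⊆ [n] with |M| = n/2, and every P ⊆ Ψ_M with |P| = |Ψ_M|/2: every completion F of the D⁻ instance determined by (M, P) satisfies dist(F, Mono) ≥ c/√n. -/

import Mathlib

open Finset

attribute [local instance] Classical.propDecidable

variable {n : ℕ}

/-- The edge of the hypercube along dimension `i` at `x` (the pair
`{x^{(i→0)}, x^{(i→1)}}`) is decreasing for `f`. -/
def decEdge (f : (Fin n → Bool) → Bool) (x : Fin n → Bool) (i : Fin n) : Prop :=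
  f (Function.update x i false) = true ∧ f (Function.update x i true) = false

/-- `x` with its `i`-th coordinate flipped. -/
def flipC (x : Fin n → Bool) (i : Fin n) : Fin n → Bool := Function.update x i (!(x i))

/-- `g` is monotone. -/
def monoB (g : (Fin n → Bool) → Bool) : Prop :=
  ∀ x y : Fin n → Bool, (∀ i, x i ≤ y i) → g x ≤ g y

/-- Distance of `f` to the set of monotone functions. -/
noncomputable def distMono (f : (Fin n → Bool) → Bool) : ℝ :=
  sInf {d : ℝ | ∃ g : (Fin n → Bool) → Bool, monoB g ∧
    d = ((univ.filter fun x => f x ≠ g x).card : ℝ) / 2 ^ n}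

/-- `I_f⁻(x)`: the number of decreasing edges of `f` incident on `x`. -/
noncomputable def Iminus (f : (Fin n → Bool) → Bool) (x : Fin n → Bool) : ℕ :=
  (univ.filter fun i => decEdge f x i).card

/-- The number of decreasing edges of `f` (each edge represented by its lower
endpoint together with its dimension). -/
noncomputable def numDecEdges (f : (Fin n → Bool) → Bool) : ℕ :=
  (univ.filter fun q : (Fin n → Bool) × Fin n => q.1 q.2 = false ∧ decEdge f q.1 q.2).card

/-- The event Capture(x, S, f). -/
def Capture (f : (Fin n → Bool) → Bool) (S : Finset (Fin n)) (x : Fin n → Bool) : Prop :=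
  ∃ i ∈ S, decEdge f x i ∧ ∀ j ∈ S \ {i}, ¬ decEdge f (flipC x i) j

/-- Hamming weight of `x` restricted to the coordinates in `M`. -/
noncomputable def wt (M : Finset (Fin n)) (x : Fin n → Bool) : ℕ :=
  (M.filter fun i => x i = true).card

/-- `g` is unate. -/
def unate (g : (Fin n → Bool) → Bool) : Prop :=
  ∃ σ : Fin n → Bool, monoB (fun x => g (fun i => xor (x i) (σ i)))

/-- Distance of `f` to the set of unate functions. -/
noncomputable def distUnate (f : (Fin n → Bool) → Bool) : ℝ :=
  sInf {d : ℝ | ∃ g : (Fin n → Bool) → Bool, unate g ∧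
    d = ((univ.filter fun x => f x ≠ g x).card : ℝ) / 2 ^ n}

/-- `g` is a `k`-junta. -/
def isJunta (k : ℕ) (g : (Fin n → Bool) → Bool) : Prop :=
  ∃ J : Finset (Fin n), J.card ≤ k ∧
    ∀ x y : Fin n → Bool, (∀ i ∈ J, x i = y i) → g x = g y

/-- Distance of `f` to the set of `k`-juntas. -/
noncomputable def distJunta (k : ℕ) (f : (Fin n → Bool) → Bool) : ℝ :=
  sInf {d : ℝ | ∃ g : (Fin n → Bool) → Bool, isJunta k g ∧
    d = ((univ.filter fun x => f x ≠ g x).card : ℝ) / 2 ^ n}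

/-- `I⁻_{f,red}(x)` for the coloring `col` (an edge is identified by its lower
endpoint along its dimension; `col e i = true` means the edge along dimension `i`
at `e` is red). -/
noncomputable def IredCol (f : (Fin n → Bool) → Bool)
    (col : (Fin n → Bool) → Fin n → Bool) (x : Fin n → Bool) : ℕ :=
  if f x = true then
    (univ.filter fun i => decEdge f x i ∧ col (Function.update x i false) i = true).card
  else 0

/-- `I⁻_{f,blue}(x)` for the coloring `col`. -/
noncomputable def IblueCol (f : (Fin n → Bool) → Bool)
    (col : (Fin n → Bool) → Fin n → Bool) (x : Fin n → Bool) : ℕ :=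
  if f x = false then
    (univ.filter fun i => decEdge f x i ∧ col (Function.update x i false) i = false).card
  else 0

/-- `Ψ_M`: the middle layer of the subcube `{0,1}^M`. -/
noncomputable def PsiSet (M : Finset (Fin n)) : Finset (↥M → Bool) :=
  univ.filter fun z => (univ.filter fun i : ↥M => z i = true).card = n / 4

/-- `x` is an erased point (for parameter `κ` and control set `M`). -/
def ErasedPt (κ : ℝ) (M : Finset (Fin n)) (x : Fin n → Bool) : Prop :=
  wt M x = n / 4 ∧ |(wt Mᶜ x : ℝ) - (n : ℝ) / 4| ≤ (n : ℝ) ^ κ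

/-- `Maj(x_{M̄})`: majority on the coordinates outside `M`. -/
noncomputable def MajBar (M : Finset (Fin n)) (x : Fin n → Bool) : Bool :=
  decide (n / 4 < wt Mᶜ x)

/-- `F` is a completion of the `D⁻` instance determined by `(M, P)`. -/
def DminusCompletion (κ : ℝ) (M : Finset (Fin n)) (P : Finset (↥M → Bool))
    (F : (Fin n → Bool) → Bool) : Prop :=
  (∀ x, wt M x < n / 4 → F x = false) ∧
  (∀ x, n / 4 < wt M x → F x = true) ∧
  (∀ x, wt M x = n / 4 → ¬ ErasedPt κ M x →
    F x = if (fun i : ↥M => x i.1) ∈ P then MajBar M x else !(MajBar M x))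

/-- The function `F` of Statement 12: `F(x) = 1` iff `|x_M| > n/4`, or
`|x_M| = n/4` and `x_M ∉ P`. -/
noncomputable def DplusF (M : Finset (Fin n)) (P : Finset (↥M → Bool))
    (x : Fin n → Bool) : Bool :=
  if n / 4 < wt M x then true
  else if wt M x = n / 4 ∧ (fun i : ↥M => x i.1) ∉ P then true
  else false


lemma cb_sq_upper (a : ℕ) : Nat.centralBinom a ^ 2 * (3*a+1) ≤ 16 ^ a := by
  induction a with
  | zero => simp [Nat.centralBinom]
  | succ a ih =>
    have h := Nat.succ_mul_centralBinom_succ a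
    have h2 : ((a+1) * Nat.centralBinom (a+1))^2 = (2*(2*a+1)*Nat.centralBinom a)^2 := by rw [h]
    refine Nat.le_of_mul_le_mul_left ?_ (show 0 < (a+1)^2 by positivity)
    have hc : (2*(2*a+1))^2 * (3*a+4) ≤ 16*(a+1)^2*(3*a+1) := by nlinarith
    calc (a+1)^2 * (Nat.centralBinom (a+1)^2*(3*(a+1)+1))
        = ((a+1)*Nat.centralBinom (a+1))^2 * (3*a+4) := by ring
      _ = (2*(2*a+1))^2*(3*a+4) * Nat.centralBinom a^2 := by rw [h2]; ring
      _ ≤ 16*(a+1)^2*(3*a+1) * Nat.centralBinom a^2 := Nat.mul_le_mul_right _ hc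
      _ = 16*(a+1)^2*(Nat.centralBinom a^2*(3*a+1)) := by ring
      _ ≤ 16*(a+1)^2*16^a := Nat.mul_le_mul_left _ ih
      _ = (a+1)^2 * 16^(a+1) := by rw [pow_succ]; ring

lemma cb_sq_lower (a : ℕ) (ha : 1 ≤ a) : 16 ^ a ≤ Nat.centralBinom a ^ 2 * (4*a) := by
  induction a, ha using Nat.le_induction with
  | base => simp [Nat.centralBinom]
  | succ a ha ih =>
    have h := Nat.succ_mul_centralBinom_succ a
    have h2 : ((a+1) * Nat.centralBinom (a+1))^2 = (2*(2*a+1)*Nat.centralBinom a)^2 := by rw [h]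
    refine Nat.le_of_mul_le_mul_left ?_ (show 0 < (a+1)^2 by positivity)
    have hc : 16*(a+1)^2*(4*a) ≤ (2*(2*a+1))^2 * (4*(a+1)) := by nlinarith
    calc (a+1)^2 * 16^(a+1)
        = 16*(a+1)^2 * 16^a := by rw [pow_succ]; ring
      _ ≤ 16*(a+1)^2 * (Nat.centralBinom a^2*(4*a)) := Nat.mul_le_mul_left _ ih
      _ = 16*(a+1)^2*(4*a) * Nat.centralBinom a^2 := by ring
      _ ≤ (2*(2*a+1))^2*(4*(a+1)) * Nat.centralBinom a^2 := Nat.mul_le_mul_right _ hc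
      _ = (2*(2*a+1)*Nat.centralBinom a)^2 * (4*(a+1)) := by ring
      _ = ((a+1) * Nat.centralBinom (a+1))^2 * (4*(a+1)) := by rw [h2]
      _ = (a+1)^2 * (Nat.centralBinom (a+1)^2 * (4*(a+1))) := by ring


lemma layer_matching {α : Type*} [DecidableEq α] (B : Finset α) (k l : ℕ) (hkl : k ≤ l)
    (hB : B.card = k + l) :
    ∃ f : Finset α → Finset α, (∀ S ∈ powersetCard k B, f S ∈ powersetCard l B ∧ S ⊆ f S) ∧
      Set.InjOn f ↑(powersetCard k B) := by
  set t : {S : Finset α // S ∈ powersetCard k B} → Finset (Finset α) :=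
    fun S => (powersetCard l B).filter (fun T => S.1 ⊆ T) with ht
  have hleft : ∀ S, l.choose k ≤ (t S).card := by
    intro S
    obtain ⟨hSB, hSk⟩ := mem_powersetCard.mp S.2
    have hcard : (powersetCard (l - k) (B \ S.1)).card = l.choose k := by
      rw [card_powersetCard, card_sdiff_of_subset hSB, hSk, hB]
      rw [show k + l - k = l by omega, ← Nat.choose_symm hkl]
    rw [← hcard]
    apply card_le_card_of_injOn (fun U => S.1 ∪ U)
    · intro U hU
      obtain ⟨hUB, hUk⟩ := mem_powersetCard.mp hU
      have hdisj : Disjoint S.1 U := by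
        refine disjoint_left.mpr fun x hx hxU => ?_
        exact (mem_sdiff.mp (hUB hxU)).2 hx
      refine mem_filter.mpr ⟨mem_powersetCard.mpr ⟨?_, ?_⟩, subset_union_left⟩
      · exact union_subset hSB (hUB.trans sdiff_subset)
      · rw [card_union_of_disjoint hdisj, hSk, hUk]; omega
    · intro U hU U' hU' hEq
      replace hU := (mem_powersetCard.mp (mem_coe.mp hU)).1
      replace hU' := (mem_powersetCard.mp (mem_coe.mp hU')).1
      have d1 : Disjoint S.1 U := by
        refine disjoint_left.mpr fun x hx hxU => ?_
        exact (mem_sdiff.mp (hU hxU)).2 hx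
      have d2 : Disjoint S.1 U' := by
        refine disjoint_left.mpr fun x hx hxU => ?_
        exact (mem_sdiff.mp (hU' hxU)).2 hx
      simp only at hEq
      have : (S.1 ∪ U) \ S.1 = (S.1 ∪ U') \ S.1 := by rw [hEq]
      rwa [union_sdiff_cancel_left d1, union_sdiff_cancel_left d2] at this
  have hright : ∀ (T : Finset α), T.card = l →
      ∀ (A : Finset {S : Finset α // S ∈ powersetCard k B}),
      (A.filter fun S => T ∈ t S).card ≤ l.choose k := by
    intro T hT A
    have : (A.filter fun S => T ∈ t S).card ≤ (powersetCard k T).card := by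
      apply card_le_card_of_injOn (fun S => S.1)
      · intro S hS
        obtain ⟨hSA, hSt⟩ := mem_filter.mp hS
        obtain ⟨-, hsub⟩ := mem_filter.mp hSt
        exact mem_powersetCard.mpr ⟨hsub, (mem_powersetCard.mp S.2).2⟩
      · intro x _ y _ h
        exact Subtype.coe_injective h
    rwa [card_powersetCard, hT] at this
  have hall : ∀ A : Finset {S : Finset α // S ∈ powersetCard k B},
      A.card ≤ (A.biUnion t).card := by
    intro A
    set W := A.biUnion t with hW
    have h1 : A.card * l.choose k ≤ ∑ S ∈ A, (t S).card := by
      simpa using card_nsmul_le_sum A (fun S => (t S).card) (l.choose k) (fun S _ => hleft S)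
    have h2 : ∑ S ∈ A, (t S).card = ∑ T ∈ W, (A.filter fun S => T ∈ t S).card := by
      have heq : ∀ S ∈ A, (t S).card = (W.filter fun T => T ∈ t S).card := by
        intro S hS
        congr 1
        rw [filter_mem_eq_inter, inter_eq_right.mpr (subset_biUnion_of_mem t hS)]
      rw [sum_congr rfl heq]
      simp_rw [card_filter]
      rw [sum_comm]
    have h3 : ∑ T ∈ W, (A.filter fun S => T ∈ t S).card ≤ W.card * l.choose k := by
      have := sum_le_card_nsmul W (fun T => (A.filter fun S => T ∈ t S).card) (l.choose k) ?_
      · simpa using this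
      · intro T hT
        obtain ⟨S₀, _, hTS₀⟩ := mem_biUnion.mp hT
        have hTl : T.card = l := (mem_powersetCard.mp (mem_filter.mp hTS₀).1).2
        exact hright T hTl A
    have := h1.trans (h2 ▸ h3)
    exact Nat.le_of_mul_le_mul_right this (Nat.choose_pos hkl)
  obtain ⟨f0, hf0inj, hf0mem⟩ := (all_card_le_biUnion_card_iff_exists_injective t).mp hall
  refine ⟨fun S => if h : S ∈ powersetCard k B then f0 ⟨S, h⟩ else ∅, ?_, ?_⟩
  · intro S hS
    simp only [dif_pos hS]
    have := hf0mem ⟨S, hS⟩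
    exact ⟨(mem_filter.mp this).1, (mem_filter.mp this).2⟩
  · intro S hS S' hS' hEq
    simp only [mem_coe] at hS hS'
    simp only [dif_pos hS, dif_pos hS'] at hEq
    exact congrArg Subtype.val (hf0inj hEq)

noncomputable def pt (M : Finset (Fin n)) (z : ↥M → Bool) (T : Finset (Fin n)) :
    Fin n → Bool :=
  fun i => if h : i ∈ M then z ⟨i, h⟩ else decide (i ∈ T)

lemma pt_restrict (M : Finset (Fin n)) (z : ↥M → Bool) (T : Finset (Fin n)) :
    (fun i : ↥M => pt M z T i.1) = z := by
  funext i
  simp only [pt, dif_pos i.2]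

lemma wt_M_pt (M : Finset (Fin n)) (z : ↥M → Bool) (T : Finset (Fin n)) :
    wt M (pt M z T) = (univ.filter fun i : ↥M => z i = true).card := by
  unfold wt
  apply card_bij (fun i hi => (⟨i, (mem_filter.mp hi).1⟩ : ↥M))
  · intro i hi
    obtain ⟨hiM, hival⟩ := mem_filter.mp hi
    refine mem_filter.mpr ⟨mem_univ _, ?_⟩
    simp only [pt, dif_pos hiM] at hival; exact hival
  · intro i hi j hj h
    exact congrArg Subtype.val h
  · intro j hj
    refine ⟨j.1, mem_filter.mpr ⟨j.2, ?_⟩, by simp⟩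
    have := (mem_filter.mp hj).2
    simp only [pt, dif_pos j.2]
    simpa using this

lemma wt_compl_pt (M : Finset (Fin n)) (z : ↥M → Bool) (T : Finset (Fin n)) (hT : T ⊆ Mᶜ) :
    wt Mᶜ (pt M z T) = T.card := by
  unfold wt
  congr 1
  ext i
  simp only [mem_filter, mem_compl]
  constructor
  · rintro ⟨hiM, hival⟩
    simp only [pt, dif_neg hiM] at hival
    exact of_decide_eq_true hival
  · intro hiT
    have hiM : i ∉ M := mem_compl.mp (hT hiT)
    exact ⟨hiM, by simp only [pt, dif_neg hiM]; exact decide_eq_true hiT⟩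

lemma pt_mono (M : Finset (Fin n)) (z : ↥M → Bool) {T T' : Finset (Fin n)} (h : T ⊆ T') :
    ∀ i, pt M z T i ≤ pt M z T' i := by
  intro i
  by_cases hiM : i ∈ M
  · simp only [pt, dif_pos hiM]; exact le_refl _
  · simp only [pt, dif_neg hiM]
    by_cases hiT : i ∈ T
    · simp [hiT, h hiT]
    · simp [hiT]

lemma pt_inj (M : Finset (Fin n)) (z z' : ↥M → Bool) {T T' : Finset (Fin n)}
    (hT : T ⊆ Mᶜ) (hT' : T' ⊆ Mᶜ) (h : pt M z T = pt M z' T') : T = T' := by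
  ext i
  constructor
  · intro hiT
    have hiM : i ∉ M := mem_compl.mp (hT hiT)
    have := congrFun h i
    simp only [pt, dif_neg hiM] at this
    apply of_decide_eq_true
    rw [← this]
    exact decide_eq_true hiT
  · intro hiT
    have hiM : i ∉ M := mem_compl.mp (hT' hiT)
    have := congrFun h i
    simp only [pt, dif_neg hiM] at this
    apply of_decide_eq_true
    rw [this]
    exact decide_eq_true hiT

lemma psiCard (M : Finset (Fin n)) : (PsiSet M).card = M.card.choose (n / 4) := by
  rw [← Fintype.card_coe M, ← card_univ (α := ↥M), ← card_powersetCard]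
  apply card_bij (fun z _ => univ.filter fun i : ↥M => z i = true)
  · intro z hz
    exact mem_powersetCard.mpr ⟨subset_univ _, (mem_filter.mp hz).2⟩
  · intro z hz z' hz' h
    funext i
    by_cases hzi : z i = true
    · have : i ∈ univ.filter fun j : ↥M => z' j = true := by
        rw [← h]; exact mem_filter.mpr ⟨mem_univ _, hzi⟩
      rw [hzi, ((mem_filter.mp this).2).symm]
    · have : i ∉ univ.filter fun j : ↥M => z' j = true := by
        rw [← h]; intro hc; exact hzi (mem_filter.mp hc).2
      have h2 : ¬ z' i = true := fun hc => this (mem_filter.mpr ⟨mem_univ _, hc⟩)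
      simp only [Bool.not_eq_true] at hzi h2
      rw [hzi, h2]
  · intro T hT
    obtain ⟨-, hTcard⟩ := mem_powersetCard.mp hT
    refine ⟨fun i => decide (i ∈ T), mem_filter.mpr ⟨mem_univ _, ?_⟩, ?_⟩
    · rw [← hTcard]; congr 1; ext i; simp
    · ext i; simp

/-- every completion `F` of a `D⁻` instance is `Ω(1/√n)`-far
from monotone. -/
theorem stmt13 : ∀ κ : ℝ, 0 < κ → κ < 1 / 2 →
    ∃ c : ℝ, 0 < c ∧ ∃ n₀ : ℕ, ∀ n : ℕ, n₀ ≤ n → 4 ∣ n →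
    ∀ M : Finset (Fin n), M.card = n / 2 →
    ∀ P : Finset (↥M → Bool), P ⊆ PsiSet M → 2 * P.card = (PsiSet M).card →
    ∀ F : (Fin n → Bool) → Bool, DminusCompletion κ M P F →
    c / Real.sqrt n ≤ distMono F := by
  intro κ hκ0 hκh
  refine ⟨1/8, by norm_num, max 1048576 (⌈(32:ℝ) ^ ((1/2 - κ)⁻¹)⌉₊ + 1), ?_⟩
  intro n hn hn4 M hM P hPsub hPcard F hF
  obtain ⟨a, rfl⟩ := hn4
  have ha0 : 1048576 ≤ 4 * a := le_trans (le_max_left _ _) hn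
  have ha1 : 262144 ≤ a := by omega
  have hq4 : 4 * a / 4 = a := by omega
  have hq2 : 4 * a / 2 = 2 * a := by omega
  have hMcard : M.card = 2 * a := by rw [hM, hq2]
  have hMc : Mᶜ.card = 2 * a := by
    rw [card_compl, hMcard, Fintype.card_fin]; omega
  set x : ℝ := ((4 * a : ℕ) : ℝ) with hxdef
  have hx0 : (0:ℝ) < x := by
    rw [hxdef]
    have : (0:ℕ) < 4*a := by omega
    exact_mod_cast this
  have hx1 : (1:ℝ) ≤ x := by
    rw [hxdef]
    have : (1:ℕ) ≤ 4*a := by omega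
    exact_mod_cast this
  have he : (0:ℝ) < 1/2 - κ := by linarith
  have hX : ((32:ℝ) ^ ((1/2 - κ)⁻¹)) ≤ x := by
    have h1 : (⌈(32:ℝ) ^ ((1/2 - κ)⁻¹)⌉₊ + 1 : ℕ) ≤ 4 * a := le_trans (le_max_right _ _) hn
    have h2 : ((⌈(32:ℝ) ^ ((1/2 - κ)⁻¹)⌉₊ + 1 : ℕ) : ℝ) ≤ x := by
      rw [hxdef]; exact_mod_cast h1
    have h3 := Nat.le_ceil ((32:ℝ) ^ ((1/2 - κ)⁻¹))
    push_cast at h2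
    linarith
  have h32 : (32:ℝ) ≤ x ^ (1/2 - κ) := by
    calc (32:ℝ) = ((32:ℝ) ^ ((1/2-κ)⁻¹)) ^ (1/2-κ) := by
          rw [← Real.rpow_mul (by norm_num : (0:ℝ) ≤ 32), inv_mul_cancel₀ he.ne', Real.rpow_one]
      _ ≤ x ^ (1/2-κ) := Real.rpow_le_rpow (by positivity) hX he.le
  have hkey : 32 * x ^ κ ≤ Real.sqrt x := by
    rw [Real.sqrt_eq_rpow]
    calc 32 * x ^ κ ≤ x ^ (1/2-κ) * x ^ κ :=
          mul_le_mul_of_nonneg_right h32 (Real.rpow_nonneg hx0.le κ)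
      _ = x ^ (1/2 : ℝ) := by rw [← Real.rpow_add hx0]; ring_nf
  have hxκ1 : (1:ℝ) ≤ x ^ κ := by
    calc (1:ℝ) = x ^ (0:ℝ) := (Real.rpow_zero x).symm
      _ ≤ x ^ κ := Real.rpow_le_rpow_of_exponent_le hx1 hκ0.le
  have hsx : Real.sqrt x = 2 * Real.sqrt a := by
    rw [show x = 2^2 * (a:ℝ) by rw [hxdef]; push_cast; ring,
      Real.sqrt_mul (by positivity), Real.sqrt_sq (by norm_num)]
  have hacast : (4:ℝ) ≤ (a:ℝ) := by
    have : (4:ℕ) ≤ a := by omega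
    exact_mod_cast this
  have hsa2 : Real.sqrt a ≤ (a:ℝ)/2 := by
    rw [show (a:ℝ)/2 = Real.sqrt (((a:ℝ)/2)^2) from (Real.sqrt_sq (by positivity)).symm]
    apply Real.sqrt_le_sqrt
    nlinarith
  set t : ℕ := ⌈x ^ κ⌉₊ + 1 with htdef
  have ht1 : 1 ≤ t := by rw [htdef]; omega
  have htlb : x ^ κ < (t:ℝ) := by
    have := Nat.le_ceil (x ^ κ)
    rw [htdef]
    push_cast
    linarith
  have htub : (t:ℝ) ≤ x ^ κ + 2 := by
    have := Nat.ceil_lt_add_one (Real.rpow_nonneg hx0.le κ)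
    rw [htdef]
    push_cast
    linarith
  clear_value t
  have hta : t ≤ a := by
    have h1 : (t:ℝ) ≤ (a:ℝ) := by
      calc (t:ℝ) ≤ x^κ + 2 := htub
        _ ≤ 32 * x^κ := by linarith
        _ ≤ Real.sqrt x := hkey
        _ = 2 * Real.sqrt a := hsx
        _ ≤ 2 * ((a:ℝ)/2) := by linarith
        _ = a := by ring
    exact_mod_cast h1
  have h4t : 4 * (t:ℝ) ≤ Real.sqrt (3*(a:ℝ)+1) := by
    have h1 : Real.sqrt (a:ℝ) ≤ Real.sqrt (3*(a:ℝ)+1) := Real.sqrt_le_sqrt (by linarith)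
    calc 4*(t:ℝ) ≤ 4*(x^κ+2) := by linarith
      _ ≤ 16 * x^κ := by linarith
      _ = (32 * x^κ)/2 := by ring
      _ ≤ Real.sqrt x / 2 := by linarith
      _ = Real.sqrt a := by rw [hsx]; ring
      _ ≤ _ := h1
  have hPsiC : (PsiSet M).card = Nat.centralBinom a := by
    rw [psiCard, hMcard, hq4, Nat.centralBinom_eq_two_mul_choose]
  have hQ : 2 * ((PsiSet M) \ P).card = Nat.centralBinom a := by
    have h1 := card_le_card hPsub
    rw [card_sdiff_of_subset hPsub]
    omega
  have hmatch : ∀ s : ℕ, ∃ f : Finset (Fin (4*a)) → Finset (Fin (4*a)),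
      t ≤ s → s ≤ a →
      (∀ S ∈ powersetCard (a - s) Mᶜ, f S ∈ powersetCard (a + s) Mᶜ ∧ S ⊆ f S) ∧
        Set.InjOn f ↑(powersetCard (a - s) Mᶜ) := by
    intro s
    by_cases h1 : t ≤ s ∧ s ≤ a
    · obtain ⟨f, hf1, hf2⟩ := layer_matching Mᶜ (a - s) (a + s) (by omega)
        (by rw [hMc]; omega)
      exact ⟨f, fun _ _ => ⟨hf1, hf2⟩⟩
    · exact ⟨id, fun h2 h3 => absurd ⟨h2, h3⟩ h1⟩
  choose fm hfm using hmatch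
  have hFval : ∀ z, z ∈ PsiSet M \ P → ∀ T, T ⊆ Mᶜ → ∀ s : ℕ, t ≤ s → s ≤ a →
      (T.card = a - s ∨ T.card = a + s) → F (pt M z T) = decide (T.card ≤ a) := by
    intro z hz T hT s hts hsa hcard
    obtain ⟨hzPsi, hzP⟩ := mem_sdiff.mp hz
    have hwtM : wt M (pt M z T) = 4*a/4 := by
      rw [wt_M_pt]; exact (mem_filter.mp hzPsi).2
    have hwtC := wt_compl_pt M z T hT
    have hs_real : x ^ κ < (s:ℝ) := lt_of_lt_of_le htlb (by exact_mod_cast hts)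
    have hNE : ¬ ErasedPt κ M (pt M z T) := by
      rintro ⟨-, habs⟩
      rw [hwtC, ← hxdef] at habs
      have ha4 : x/4 = (a:ℝ) := by rw [hxdef]; push_cast; ring
      rw [ha4] at habs
      rcases hcard with h | h
      · rw [h] at habs
        rw [show ((a - s : ℕ):ℝ) = (a:ℝ) - (s:ℝ) by
          rw [Nat.cast_sub hsa]] at habs
        rw [show (a:ℝ) - (s:ℝ) - (a:ℝ) = -(s:ℝ) by ring, abs_neg, abs_of_nonneg (by positivity)] at habs
        linarith
      · rw [h, Nat.cast_add] at habs
        rw [show (a:ℝ) + (s:ℝ) - (a:ℝ) = (s:ℝ) by ring, abs_of_nonneg (by positivity)] at habs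
        linarith
    have hFx := hF.2.2 (pt M z T) hwtM hNE
    rw [pt_restrict, if_neg hzP] at hFx
    rw [hFx]
    unfold MajBar
    rw [hwtC, hq4]
    by_cases hle : T.card ≤ a
    · simp [hle, Nat.not_lt.mpr hle]
    · simp [hle, Nat.lt_of_not_le hle]
  have hmain : ∀ g : (Fin (4*a) → Bool) → Bool, monoB g →
      ((PsiSet M \ P).card * ∑ s ∈ Icc t a, (2*a).choose (a - s) : ℕ) ≤
        (univ.filter fun y => F y ≠ g y).card := by
    intro g hg
    set I : Finset ((↥M → Bool) × Σ _ : ℕ, Finset (Fin (4*a))) :=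
      (PsiSet M \ P) ×ˢ ((Icc t a).sigma fun s => powersetCard (a - s) Mᶜ) with hI
    have hIcard : I.card = (PsiSet M \ P).card * ∑ s ∈ Icc t a, (2*a).choose (a-s) := by
      rw [hI, card_product, card_sigma]
      congr 1
      exact sum_congr rfl fun s _ => by rw [card_powersetCard, hMc]
    rw [← hIcard]
    apply card_le_card_of_injOn
      (fun p => if F (pt M p.1 p.2.2) ≠ g (pt M p.1 p.2.2) then pt M p.1 p.2.2
                else pt M p.1 (fm p.2.1 p.2.2))
    · rintro ⟨z, s, T⟩ hp
      have hp : (z, (⟨s, T⟩ : Σ _ : ℕ, Finset (Fin (4*a)))) ∈ I := hp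
      simp only [hI, mem_product, mem_sigma, mem_Icc] at hp
      obtain ⟨hz, hs, hT⟩ := hp
      obtain ⟨hTsub, hTcard⟩ := mem_powersetCard.mp hT
      obtain ⟨hfm1, hfm2⟩ := hfm s hs.1 hs.2
      obtain ⟨hT'mem, hTT'⟩ := hfm1 T hT
      obtain ⟨hT'sub, hT'card⟩ := mem_powersetCard.mp hT'mem
      have hFx : F (pt M z T) = true := by
        rw [hFval z hz T hTsub s hs.1 hs.2 (Or.inl hTcard)]
        simp only [decide_eq_true_eq]
        omega
      have hFy : F (pt M z (fm s T)) = false := by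
        rw [hFval z hz (fm s T) hT'sub s hs.1 hs.2 (Or.inr hT'card)]
        simp only [decide_eq_false_iff_not]
        omega
      simp only [mem_coe, mem_filter, mem_univ, true_and]
      by_cases hd : F (pt M z T) ≠ g (pt M z T)
      · rw [if_pos hd]; exact hd
      · rw [if_neg hd]
        push_neg at hd
        have hgx : g (pt M z T) = true := by rw [← hd, hFx]
        have hle := hg _ _ (pt_mono M z hTT')
        have hgy : g (pt M z (fm s T)) = true := by
          rw [hgx] at hle
          cases h : g (pt M z (fm s T)) with
          | false => rw [h] at hle; exact absurd hle (by decide)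
          | true => rfl
        rw [hFy, hgy]
        simp
    · rintro ⟨z, s, T⟩ hp ⟨z', s', T'⟩ hp' hEq
      simp only [hI, mem_coe, mem_product, mem_sigma, mem_Icc] at hp hp'
      obtain ⟨hz, ⟨hs1, hs2⟩, hT⟩ := hp
      obtain ⟨hz', ⟨hs1', hs2'⟩, hT'⟩ := hp'
      obtain ⟨hTsub, hTcard⟩ := mem_powersetCard.mp hT
      obtain ⟨hT'sub, hT'card⟩ := mem_powersetCard.mp hT'
      obtain ⟨hfm1, hfm2⟩ := hfm s hs1 hs2
      obtain ⟨hfm1', hfm2'⟩ := hfm s' hs1' hs2'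
      obtain ⟨hU, hTU⟩ := hfm1 T hT
      obtain ⟨hUsub, hUcard⟩ := mem_powersetCard.mp hU
      obtain ⟨hU', hTU'⟩ := hfm1' T' hT'
      obtain ⟨hU'sub, hU'card⟩ := mem_powersetCard.mp hU'
      simp only at hEq
      have hzz : ∀ (T₁ T₂ : Finset (Fin (4*a))), pt M z T₁ = pt M z' T₂ → z = z' := by
        intro T₁ T₂ h
        have := congrArg (fun y => (fun i : ↥M => y i.1)) h
        rwa [pt_restrict, pt_restrict] at this
      split_ifs at hEq with h1 h2 h2
      · have hzeq := hzz _ _ hEq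
        have hw := congrArg (wt Mᶜ) hEq
        rw [wt_compl_pt M z T hTsub, wt_compl_pt M z' T' hT'sub] at hw
        have hss : s = s' := by omega
        have hTeq := pt_inj M z z' hTsub hT'sub hEq
        subst hzeq; subst hss; subst hTeq; rfl
      · have hw := congrArg (wt Mᶜ) hEq
        rw [wt_compl_pt M z T hTsub, wt_compl_pt M z' (fm s' T') hU'sub] at hw
        omega
      · have hw := congrArg (wt Mᶜ) hEq
        rw [wt_compl_pt M z (fm s T) hUsub, wt_compl_pt M z' T' hT'sub] at hw
        omega
      · have hzeq := hzz _ _ hEq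
        have hw := congrArg (wt Mᶜ) hEq
        rw [wt_compl_pt M z (fm s T) hUsub, wt_compl_pt M z' (fm s' T') hU'sub] at hw
        have hss : s = s' := by omega
        subst hzeq; subst hss
        have hfmeq := pt_inj M z z hUsub hU'sub hEq
        have hTeq : T = T' := hfm2 (mem_coe.mpr hT) (mem_coe.mpr hT') hfmeq
        subst hTeq; rfl
  set S1 := ∑ k ∈ range (a - t + 1), (2*a).choose k with hS1
  clear_value S1
  have hreindex : ∑ s ∈ Icc t a, (2*a).choose (a-s) = S1 := by
    rw [hS1]
    apply sum_nbij' (i := fun s => a - s) (j := fun k => a - k)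
    · intro s hs
      rw [mem_Icc] at hs
      rw [mem_range]
      omega
    · intro k hk
      rw [mem_range] at hk
      rw [mem_Icc]
      omega
    · intro s hs
      rw [mem_Icc] at hs
      omega
    · intro k hk
      rw [mem_range] at hk
      omega
    · intro s hs
      rfl
  set tC := t * Nat.centralBinom a with htC
  clear_value tC
  have hsplit : 4^a ≤ 2 * S1 + 2 * tC := by
    have htot : ∑ k ∈ Ico 0 (2*a+1), (2*a).choose k = 4^a := by
      rw [← range_eq_Ico, Nat.sum_range_choose, pow_mul]
      norm_num
    have hsplit1 := sum_Ico_consecutive (fun k => (2*a).choose k)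
      (show 0 ≤ a-t+1 by omega) (show a-t+1 ≤ a+t by omega)
    have hsplit2 := sum_Ico_consecutive (fun k => (2*a).choose k)
      (show 0 ≤ a+t by omega) (show a+t ≤ 2*a+1 by omega)
    have hthird : ∑ k ∈ Ico (a+t) (2*a+1), (2*a).choose k = S1 := by
      rw [hS1, range_eq_Ico]
      apply sum_nbij' (i := fun k => 2*a - k) (j := fun k => 2*a - k)
      · intro k hk
        rw [mem_Ico] at hk
        rw [mem_Ico]
        omega
      · intro k hk
        rw [mem_Ico] at hk
        rw [mem_Ico]
        omega
      · intro k hk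
        rw [mem_Ico] at hk
        omega
      · intro k hk
        rw [mem_Ico] at hk
        omega
      · intro k hk
        rw [mem_Ico] at hk
        exact (Nat.choose_symm (show 2*a - k ≤ 2*a by omega)).symm ▸
          (by rw [show 2*a - (2*a - k) = k by omega])
    have hfirst : ∑ k ∈ Ico 0 (a-t+1), (2*a).choose k = S1 := by
      rw [hS1, range_eq_Ico]
    have hmid : ∑ k ∈ Ico (a-t+1) (a+t), (2*a).choose k ≤ 2 * tC := by
      have h1 : ∑ k ∈ Ico (a-t+1) (a+t), (2*a).choose k
          ≤ (Ico (a-t+1) (a+t)).card * Nat.centralBinom a := by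
        simpa [smul_eq_mul] using sum_le_card_nsmul (Ico (a-t+1) (a+t))
          (fun k => (2*a).choose k) (Nat.centralBinom a)
          (fun k _ => Nat.choose_le_centralBinom k a)
      have h2 : (Ico (a-t+1) (a+t)).card * Nat.centralBinom a ≤ 2 * tC := by
        rw [Nat.card_Ico, htC]
        have : a + t - (a - t + 1) ≤ 2 * t := by omega
        calc (a + t - (a - t + 1)) * Nat.centralBinom a
            ≤ (2*t) * Nat.centralBinom a := Nat.mul_le_mul_right _ this
          _ = 2 * (t * Nat.centralBinom a) := by ring
      exact h1.trans h2
    omega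
  have h4tC : 4 * tC ≤ 4^a := by
    have hub : (Nat.centralBinom a : ℝ) * Real.sqrt (3*(a:ℝ)+1) ≤ 4^a := by
      have hnat := cb_sq_upper a
      have h1 : ((Nat.centralBinom a:ℝ) * Real.sqrt (3*(a:ℝ)+1))^2 ≤ ((4:ℝ)^a)^2 := by
        rw [mul_pow, Real.sq_sqrt (by positivity)]
        rw [show ((4:ℝ)^a)^2 = 16^a by rw [show (16:ℝ) = 4^2 by norm_num, ← pow_mul, mul_comm, pow_mul]]
        have := (Nat.cast_le (α := ℝ)).mpr hnat
        push_cast at this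
        linarith
      exact le_of_pow_le_pow_left₀ two_ne_zero (by positivity) h1
    have h2 : ((4 * tC : ℕ):ℝ) ≤ ((4^a : ℕ):ℝ) := by
      rw [htC]
      push_cast
      calc (4:ℝ) * ((t:ℝ) * (Nat.centralBinom a:ℝ))
          = (4*(t:ℝ)) * (Nat.centralBinom a:ℝ) := by ring
        _ ≤ Real.sqrt (3*(a:ℝ)+1) * (Nat.centralBinom a:ℝ) :=
            mul_le_mul_of_nonneg_right h4t (by positivity)
        _ = (Nat.centralBinom a:ℝ) * Real.sqrt (3*(a:ℝ)+1) := mul_comm _ _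
        _ ≤ 4^a := hub
    exact_mod_cast h2
  have hS14 : 4^a ≤ 4 * S1 := by omega
  unfold distMono
  apply le_csInf
  · refine ⟨((univ.filter fun y => F y ≠ (fun _ => false) y).card : ℝ) / 2 ^ (4*a),
      fun _ => false, fun x y _ => Bool.false_le _, rfl⟩
  · rintro d ⟨g, hg, rfl⟩
    have hcount := hmain g hg
    rw [hreindex] at hcount
    set D := (univ.filter fun y => F y ≠ g y).card with hD
    clear_value D
    set Cb := Nat.centralBinom a with hCb
    clear_value Cb
    have h8D : Cb * 4^a ≤ 8 * D := by
      calc Cb * 4^a ≤ Cb * (4*S1) := Nat.mul_le_mul_left _ hS14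
        _ = (2*((PsiSet M) \ P).card) * (4*S1) := by rw [hQ]
        _ = 8 * (((PsiSet M) \ P).card * S1) := by ring
        _ ≤ 8 * D := Nat.mul_le_mul_left _ hcount
    have hClb : (4:ℝ)^a ≤ (Cb:ℝ) * (2*Real.sqrt a) := by
      have hnat := cb_sq_lower a (by omega)
      have h1 : ((4:ℝ)^a)^2 ≤ ((Cb:ℝ) * (2*Real.sqrt a))^2 := by
        rw [mul_pow, mul_pow, Real.sq_sqrt (by positivity)]
        rw [show ((4:ℝ)^a)^2 = 16^a by rw [show (16:ℝ) = 4^2 by norm_num, ← pow_mul, mul_comm, pow_mul]]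
        have := (Nat.cast_le (α := ℝ)).mpr hnat
        push_cast at this
        rw [hCb]
        linarith
      exact le_of_pow_le_pow_left₀ two_ne_zero (by positivity) h1
    have hD8 : (Cb:ℝ) * 4^a ≤ 8 * (D:ℝ) := by
      have := (Nat.cast_le (α := ℝ)).mpr h8D
      push_cast at this
      linarith
    have hsqa_pos : (0:ℝ) < Real.sqrt a := Real.sqrt_pos.mpr (by positivity)
    rw [div_le_div_iff₀ (by rw [hsx]; positivity) (by positivity)]
    rw [hsx]
    have h2pow : (2:ℝ)^(4*a) = 16^a := by
      rw [show (16:ℝ) = 2^4 by norm_num, ← pow_mul]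
    calc (1:ℝ)/8 * 2^(4*a) = (1/8) * (4^a * 4^a) := by
          rw [h2pow, show (16:ℝ) = 4*4 by norm_num, mul_pow]
      _ ≤ (1/8) * ((Cb * (2*Real.sqrt a)) * 4^a) := by gcongr
      _ = (1/8) * ((Cb * 4^a) * (2*Real.sqrt a)) := by ring
      _ ≤ (1/8) * ((8*D) * (2*Real.sqrt a)) := by gcongr
      _ = D * (2 * Real.sqrt a) := by ring
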